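/- Let H be a real inner product space and F : H → H satisfy ⟨x, F(x)⟩ ≤ 0 for all x (dissipativity). Fix d with 0 ≤ d ≤ 1 and Δt > 0, and suppose u^{n−1}, uⁿ, uⁿ⁺¹, y⁽²⁾ in H satisfy y⁽²⁾ = d·u^{n−1} + (1−d)uⁿ + Δt·F(y⁽²⁾) and uⁿ⁺¹ = (1/(3−2d))(2y⁽²⁾ + 2(1−d)uⁿ − u^{n−1}). Define Xⁿ = (uⁿ, u^{n−1}) and the G-norm ‖X‖²_G = XᵀGX with G = (1/4)[[2d²−7d+6, −(2d−3)(d−1)], [−(2d−3)(d−1), 2d²−3d+2]] (acting blockwise via inner products). Then ‖Xⁿ⁺¹‖²_G ≤ ‖Xⁿ‖²_G − ((2d−3)(d−1)/4)·‖uⁿ⁺¹ − 2uⁿ + u^{n−1}‖², and in particular ‖Xⁿ⁺¹‖²_G ≤ ‖Xⁿ‖²_G, so the IE-Filt(d) method is energy stable. -/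

import Mathlib

open RealInnerProductSpace

/-- Energy stability of the IE-Filt(d) method in the G-norm. -/
theorem stmt_7 {H : Type*} [NormedAddCommGroup H] [InnerProductSpace ℝ H]
    (F : H → H) (hF : ∀ x : H, ⟪x, F x⟫ ≤ 0)
    (d Δt : ℝ) (hd0 : 0 ≤ d) (hd1 : d ≤ 1) (hΔt : 0 < Δt)
    (um un un1 y2 : H)
    (hy2 : y2 = d • um + (1 - d) • un + Δt • F y2)
    (hout : un1 = (1 / (3 - 2*d)) • ((2:ℝ) • y2 + (2*(1-d)) • un - um)) :
    ((2*d^2 - 7*d + 6)/4) * ‖un1‖^2 + 2 * (-(2*d-3)*(d-1)/4) * ⟪un1, un⟫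
        + ((2*d^2 - 3*d + 2)/4) * ‖un‖^2
      ≤ ((2*d^2 - 7*d + 6)/4) * ‖un‖^2 + 2 * (-(2*d-3)*(d-1)/4) * ⟪un, um⟫
          + ((2*d^2 - 3*d + 2)/4) * ‖um‖^2
        - ((2*d-3)*(d-1)/4) * ‖un1 - (2:ℝ) • un + um‖^2 ∧
    ((2*d^2 - 7*d + 6)/4) * ‖un1‖^2 + 2 * (-(2*d-3)*(d-1)/4) * ⟪un1, un⟫
        + ((2*d^2 - 3*d + 2)/4) * ‖un‖^2
      ≤ ((2*d^2 - 7*d + 6)/4) * ‖un‖^2 + 2 * (-(2*d-3)*(d-1)/4) * ⟪un, um⟫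
          + ((2*d^2 - 3*d + 2)/4) * ‖um‖^2 := by
  have h32 : (3 : ℝ) - 2*d ≠ 0 := by nlinarith
  -- solve for y2 in terms of un1, un, um
  have hy2' : y2 = ((3 - 2*d)/2) • un1 + (d - 1) • un + (1/2 : ℝ) • um := by
    have h1 : (3 - 2*d) • un1 = (2:ℝ) • y2 + (2*(1-d)) • un - um := by
      rw [hout, smul_smul]
      field_simp
      simp only [one_smul]
    have h2 : ((3 - 2*d)/2) • un1 = y2 + (1-d) • un - (1/2 : ℝ) • um := by
      have := congrArg (fun z => (1/2 : ℝ) • z) h1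
      simp only [smul_smul, smul_sub, smul_add] at this ⊢
      rw [show (3 - 2*d)/2 = (1/2) * (3 - 2*d) by ring, this]
      module
    rw [h2]; module
  -- key dissipativity inequality
  have hkey : ⟪y2, y2 - (d • um + (1 - d) • un)⟫ ≤ 0 := by
    have hsub : y2 - (d • um + (1 - d) • un) = Δt • F y2 := by
      conv_lhs => rw [hy2]
      abel
    rw [hsub, real_inner_smul_right]
    exact mul_nonpos_of_nonneg_of_nonpos hΔt.le (hF y2)
  -- the exact energy identity
  have hc : 0 ≤ (2*d-3)*(d-1)/4 := by nlinarith
  have hE :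
      ((2*d^2 - 7*d + 6)/4) * ‖un1‖^2 + 2 * (-(2*d-3)*(d-1)/4) * ⟪un1, un⟫
          + ((2*d^2 - 3*d + 2)/4) * ‖un‖^2
        = ((2*d^2 - 7*d + 6)/4) * ‖un‖^2 + 2 * (-(2*d-3)*(d-1)/4) * ⟪un, um⟫
          + ((2*d^2 - 3*d + 2)/4) * ‖um‖^2
          - ((2*d-3)*(d-1)/4) * ‖un1 - (2:ℝ) • un + um‖^2
          + ⟪y2, y2 - (d • um + (1 - d) • un)⟫ := by
    simp only [hy2', ← real_inner_self_eq_norm_sq]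
    simp only [inner_add_left, inner_add_right, inner_sub_left, inner_sub_right,
      real_inner_smul_left, real_inner_smul_right]
    rw [real_inner_comm un un1, real_inner_comm um un1, real_inner_comm um un]
    ring
  constructor
  · linarith [hkey, hE]
  · nlinarith [hkey, hE, mul_nonneg hc (sq_nonneg ‖un1 - (2:ℝ) • un + um‖)]
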